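/- (Lemma 3: geometric tracking error bound, deterministic errors.) Let A : ℝⁿ → ℝᵐ be a nonzero linear map with χ := σ_min/σ_max. For k ≥ 1 let f_k : ℝⁿ → ℝ be convex and differentiable with L-Lipschitz gradient, with minimizer set X_k* = {x : A x = u_k*} (u_k* in the range of A), ∇f_k vanishing on X_k*, and quadratic growth f_k(x) − f_k* ≥ (μ/2) dist(x, X_k*)², μ > 0. Fix ν ≥ 0, α > 0 with αL(1+ν)² < 1; set ℓ² := 1 − μα(1 − αL(1+ν)²) + 2ναL, assume 0 < ℓ < χ, and ζ := α(1+αL)/ℓ. Let x_1 ∈ ℝⁿ and x_{k+1} = x_k − α(∇f_k(x_k) + e_k) with errors ‖e_k‖ ≤ ε_k + ν‖∇f_k(x_k)‖ and ε_k ≤ ε. Suppose there exist x_k* ∈ X_k* with ‖x_{k+1}* − x_k*‖ ≤ σ_v for all k. Then for every k ≥ 1, dist(x_{k+1}, X_{k+1}*) ≤ (ℓ/χ)^k · dist(x_1, X_1*) + [(1 − (ℓ/χ)^k)/(1 − ℓ/χ)] · (σ_v + ζε)/χ. -/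

import Mathlib

set_option maxHeartbeats 1000000

open scoped RealInnerProductSpace
open Metric Set Filter

section Aux
variable {F : Type*} [NormedAddCommGroup F] [InnerProductSpace ℝ F] [CompleteSpace F]

lemma line_hasDerivAt {f : F → ℝ} (hf : Differentiable ℝ f) (a v : F) (t : ℝ) :
    HasDerivAt (fun s : ℝ => f (a + s • v)) ⟪gradient f (a + t • v), v⟫ t := by
  have h1 : HasFDerivAt f ((InnerProductSpace.toDualMap ℝ F) (gradient f (a + t • v))) (a + t • v) :=
    hasGradientAt_iff_hasFDerivAt.mp (hf _).hasGradientAt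
  have h2 : HasDerivAt (fun s : ℝ => a + s • v) v t := by
    simpa using ((hasDerivAt_id t).smul_const v).const_add a
  exact h1.comp_hasDerivAt t h2

lemma convex_grad_ineq {f : F → ℝ} (hc : ConvexOn ℝ Set.univ f) (hf : Differentiable ℝ f)
    (x y : F) : f x + ⟪gradient f x, y - x⟫ ≤ f y := by
  set v := y - x with hv
  set φ : ℝ → ℝ := fun s => f (x + s • v) with hφ
  have hd : HasDerivAt φ ⟪gradient f x, v⟫ 0 := by
    simpa using line_hasDerivAt hf x v 0
  have hslope : Tendsto (slope φ 0) (nhdsWithin 0 (Set.Ioi 0)) (nhds ⟪gradient f x, v⟫) :=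
    (hasDerivAt_iff_tendsto_slope.mp hd).mono_left
      (nhdsWithin_mono 0 fun t ht => by simpa using (ne_of_gt ht))
  have hev : ∀ᶠ t in nhdsWithin 0 (Set.Ioi 0), slope φ 0 t ≤ f y - f x := by
    filter_upwards [Ioc_mem_nhdsGT_of_mem (by norm_num : (0:ℝ) ∈ Set.Ico 0 1)] with t ht
    have ht0 : 0 < t := ht.1
    have hcv := hc.2 (Set.mem_univ x) (Set.mem_univ y) (by linarith [ht.2] : 0 ≤ 1 - t)
      (le_of_lt ht0) (by ring)
    have hpt : (1 - t) • x + t • y = x + t • v := by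
      simp only [hv, smul_sub]; module
    rw [hpt] at hcv
    have hs : slope φ 0 t = (φ t - φ 0) / t := by
      simp [slope, div_eq_inv_mul]
    rw [hs, div_le_iff₀ ht0]
    have hφ0 : φ 0 = f x := by simp [hφ]
    have hφt : φ t ≤ (1 - t) * f x + t * f y := by
      simpa [smul_eq_mul] using hcv
    rw [hφ0]
    nlinarith
  have := le_of_tendsto hslope hev
  linarith

lemma descent_lemma {f : F → ℝ} (hf : Differentiable ℝ f) {L : ℝ}
    (hLip : ∀ u v, ‖gradient f u - gradient f v‖ ≤ L * ‖u - v‖)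
    (x y : F) : f y ≤ f x + ⟪gradient f x, y - x⟫ + L / 2 * ‖y - x‖ ^ 2 := by
  set v := y - x with hv
  set φ : ℝ → ℝ := fun s => f (x + s • v) with hφ
  set c : ℝ := ⟪gradient f x, v⟫ with hcdef
  set ψ : ℝ → ℝ := fun s => f x + s * c + L / 2 * ‖v‖ ^ 2 * s ^ 2 - φ s with hψ
  have hψd : ∀ t : ℝ, HasDerivAt ψ (c + L * ‖v‖ ^ 2 * t - ⟪gradient f (x + t • v), v⟫) t := by
    intro t
    have h1 : HasDerivAt (fun s : ℝ => f x + s * c + L / 2 * ‖v‖ ^ 2 * s ^ 2)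
        (c + L / 2 * ‖v‖ ^ 2 * (2 * t)) t := by
      have := (((hasDerivAt_id t).mul_const c).const_add (f x)).add
        (((hasDerivAt_pow 2 t)).const_mul (L / 2 * ‖v‖ ^ 2))
      simpa [mul_comm, mul_assoc, mul_left_comm, Pi.add_def] using this
    have h2 := line_hasDerivAt hf x v t
    have := h1.sub h2
    exact this.congr_deriv (by ring)
  have hmono : MonotoneOn ψ (Set.Icc 0 1) := by
    apply monotoneOn_of_deriv_nonneg (convex_Icc 0 1)
    · exact Continuous.continuousOn
        (Differentiable.continuous fun t => (hψd t).differentiableAt)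
    · exact fun t _ => (hψd t).differentiableAt.differentiableWithinAt
    · intro t ht
      rw [interior_Icc] at ht
      rw [(hψd t).deriv]
      have hcs : ⟪gradient f (x + t • v) - gradient f x, v⟫ ≤
          ‖gradient f (x + t • v) - gradient f x‖ * ‖v‖ := real_inner_le_norm _ _
      have hlip : ‖gradient f (x + t • v) - gradient f x‖ ≤ L * (t * ‖v‖) := by
        have := hLip (x + t • v) x
        simpa [norm_smul, abs_of_pos ht.1] using this
      have hinner : ⟪gradient f (x + t • v), v⟫ - c ≤ L * ‖v‖ ^ 2 * t := by
        have h3 : ⟪gradient f (x + t • v), v⟫ - c =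
            ⟪gradient f (x + t • v) - gradient f x, v⟫ := by
          rw [inner_sub_left]
        rw [h3]
        calc ⟪gradient f (x + t • v) - gradient f x, v⟫
            ≤ ‖gradient f (x + t • v) - gradient f x‖ * ‖v‖ := hcs
          _ ≤ L * (t * ‖v‖) * ‖v‖ := by
              apply mul_le_mul_of_nonneg_right hlip (norm_nonneg _)
          _ = L * ‖v‖ ^ 2 * t := by ring
      linarith
  have h01 := hmono (Set.left_mem_Icc.mpr zero_le_one) (Set.right_mem_Icc.mpr zero_le_one)
    zero_le_one
  have hψ0 : ψ 0 = 0 := by simp [hψ, hφ]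
  have hψ1 : ψ 1 = f x + c + L / 2 * ‖v‖ ^ 2 - f y := by
    simp [hψ, hφ, hv]
  rw [hψ0, hψ1] at h01
  linarith

end Aux

/-- Lemma 3: geometric tracking error bound, deterministic errors:
`dist(x_{k+1}, X_{k+1}*) ≤ (ℓ/χ)^k dist(x_1, X_1*) + [(1 − (ℓ/χ)^k)/(1 − ℓ/χ)]·(σ_v + ζε)/χ`. -/
theorem geometric_tracking_error_bound {n m : ℕ}
    (A : EuclideanSpace ℝ (Fin n) →L[ℝ] EuclideanSpace ℝ (Fin m)) (hA : A ≠ 0)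
    (σmin σmax χ : ℝ)
    (hσmin : σmin = sInf {c : ℝ | ∃ x : EuclideanSpace ℝ (Fin n),
      x ≠ 0 ∧ x ∈ (LinearMap.ker A.toLinearMap)ᗮ ∧ c = ‖A x‖ / ‖x‖})
    (hσmax : σmax = ‖A‖) (hχ : χ = σmin / σmax)
    (f : ℕ → EuclideanSpace ℝ (Fin n) → ℝ)
    (hconv : ∀ k, ConvexOn ℝ Set.univ (f k)) (hdiff : ∀ k, Differentiable ℝ (f k))
    (L : ℝ) (hL : 0 < L)
    (hLip : ∀ k, ∀ u v : EuclideanSpace ℝ (Fin n),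
      ‖gradient (f k) u - gradient (f k) v‖ ≤ L * ‖u - v‖)
    (ustar : ℕ → EuclideanSpace ℝ (Fin m)) (hrange : ∀ k, ustar k ∈ Set.range A)
    (Xstar : ℕ → Set (EuclideanSpace ℝ (Fin n)))
    (hXstar : ∀ k, Xstar k = {x | A x = ustar k})
    (hXmin : ∀ k, Xstar k = {x | ∀ y : EuclideanSpace ℝ (Fin n), f k x ≤ f k y})
    (hgrad0 : ∀ k, ∀ y ∈ Xstar k, gradient (f k) y = 0)
    (fstar : ℕ → ℝ) (hfstar : ∀ k, ∀ x ∈ Xstar k, f k x = fstar k)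
    (μ : ℝ) (hμ : 0 < μ)
    (hQG : ∀ k, ∀ x : EuclideanSpace ℝ (Fin n),
      μ / 2 * Metric.infDist x (Xstar k) ^ 2 ≤ f k x - fstar k)
    (ε : ℕ → ℝ) (hεnn : ∀ k, 0 ≤ ε k) (εbar : ℝ) (hεbar : ∀ k, ε k ≤ εbar)
    (ν α : ℝ) (hν : 0 ≤ ν) (hα : 0 < α)
    (hstep : α * L * (1 + ν) ^ 2 < 1)
    (ℓ ζ : ℝ) (hℓpos : 0 < ℓ)
    (hℓsq : ℓ ^ 2 = 1 - μ * α * (1 - α * L * (1 + ν) ^ 2) + 2 * ν * α * L)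
    (hℓχ : ℓ < χ) (hζ : ζ = α * (1 + α * L) / ℓ)
    (x e : ℕ → EuclideanSpace ℝ (Fin n))
    (hrec : ∀ k, 1 ≤ k → x (k + 1) = x k - α • (gradient (f k) (x k) + e k))
    (herr : ∀ k, 1 ≤ k → ‖e k‖ ≤ ε k + ν * ‖gradient (f k) (x k)‖)
    (xstar : ℕ → EuclideanSpace ℝ (Fin n)) (hxstar : ∀ k, xstar k ∈ Xstar k)
    (σv : ℝ) (hσv : ∀ k, 1 ≤ k → ‖xstar (k + 1) - xstar k‖ ≤ σv) :
    ∀ k, 1 ≤ k →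
      Metric.infDist (x (k + 1)) (Xstar (k + 1)) ≤
        (ℓ / χ) ^ k * Metric.infDist (x 1) (Xstar 1) +
          (1 - (ℓ / χ) ^ k) / (1 - ℓ / χ) * ((σv + ζ * εbar) / χ) := by
  -- Part 1: basic facts about χ
  have hAnorm : 0 < ‖A‖ := norm_pos_iff.mpr hA
  have hχ1 : χ ≤ 1 := by
    have hker : (LinearMap.ker A.toLinearMap)ᗮ ≠ ⊥ := by
      intro h
      rw [Submodule.orthogonal_eq_bot_iff] at h
      apply hA
      ext z
      have hz : z ∈ LinearMap.ker A.toLinearMap := by rw [h]; trivial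
      have hz' : A z = 0 := hz
      simp [hz']
    obtain ⟨x0, hx0mem, hx0ne⟩ := Submodule.ne_bot_iff _ |>.mp hker
    have hx0pos : 0 < ‖x0‖ := norm_pos_iff.mpr hx0ne
    have hmem : (‖A x0‖ / ‖x0‖) ∈ {c : ℝ | ∃ x : EuclideanSpace ℝ (Fin n),
        x ≠ 0 ∧ x ∈ (LinearMap.ker A.toLinearMap)ᗮ ∧ c = ‖A x‖ / ‖x‖} := ⟨x0, hx0ne, hx0mem, rfl⟩
    have hbdd : BddBelow {c : ℝ | ∃ x : EuclideanSpace ℝ (Fin n),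
        x ≠ 0 ∧ x ∈ (LinearMap.ker A.toLinearMap)ᗮ ∧ c = ‖A x‖ / ‖x‖} := by
      refine ⟨0, fun c hc => ?_⟩
      obtain ⟨z, hz, -, rfl⟩ := hc
      positivity
    have h1 : σmin ≤ ‖A x0‖ / ‖x0‖ := by
      rw [hσmin]; exact csInf_le hbdd hmem
    have h2 : ‖A x0‖ / ‖x0‖ ≤ ‖A‖ := by
      rw [div_le_iff₀ hx0pos]
      exact A.le_opNorm x0
    rw [hχ, hσmax, div_le_one hAnorm]
    linarith
  have hχpos : 0 < χ := lt_trans hℓpos hℓχ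
  have hℓ1 : ℓ < 1 := lt_of_lt_of_le hℓχ hχ1
  have hαL : α * L < 1 := by nlinarith
  -- Part 2: one-step bound
  have hstep1 : ∀ k, 1 ≤ k → Metric.infDist (x (k + 1)) (Xstar (k + 1)) ≤
      ℓ * Metric.infDist (x k) (Xstar k) + (α * ε k + σv) := by
    intro k hk
    -- setup
    have hXset : Xstar k = (A : EuclideanSpace ℝ (Fin n) → EuclideanSpace ℝ (Fin m)) ⁻¹' {ustar k} := by
      rw [hXstar k]; rfl
    have hclosed : IsClosed (Xstar k) := by
      rw [hXset]; exact IsClosed.preimage A.continuous isClosed_singleton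
    have hne : (Xstar k).Nonempty := ⟨xstar k, hxstar k⟩
    obtain ⟨p, hp, hpd⟩ := hclosed.exists_infDist_eq_dist hne (x k)
    set g : EuclideanSpace ℝ (Fin n) := gradient (f k) (x k) with hg
    set D : ℝ := ‖x k - p‖ with hD
    have hDdist : Metric.infDist (x k) (Xstar k) = D := by
      rw [hpd, dist_eq_norm]
    have hD0 : 0 ≤ D := norm_nonneg _
    set G : ℝ := ‖g‖ with hG
    have hG0 : 0 ≤ G := norm_nonneg _
    have hgp : gradient (f k) p = 0 := hgrad0 k p hp
    have hGL : G ≤ L * D := by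
      have := hLip k (x k) p
      rwa [hgp, sub_zero] at this
    have hfp : f k p = fstar k := hfstar k p hp
    set s : ℝ := f k (x k) - fstar k with hs
    -- convexity inequality
    have hconvi : s ≤ ⟪g, x k - p⟫ := by
      have := convex_grad_ineq (hconv k) (hdiff k) (x k) p
      have h2 : ⟪g, p - x k⟫ = -⟪g, x k - p⟫ := by
        rw [← inner_neg_right]; congr 1; abel
      rw [← hg] at this
      rw [h2] at this
      simp only [hs, hfp] at *
      linarith
    -- quadratic growth
    have hqg : μ / 2 * D ^ 2 ≤ s := by
      have := hQG k (x k)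
      rwa [hDdist] at this
    have hs0 : 0 ≤ s := le_trans (by positivity) hqg
    -- descent: ‖g‖² ≤ 2 L s
    have hmin : ∀ y, fstar k ≤ f k y := by
      intro y
      have hp' : p ∈ {z | ∀ y, f k z ≤ f k y} := by rw [← hXmin k]; exact hp
      calc fstar k = f k p := hfp.symm
        _ ≤ f k y := hp' y
    have hgs : G ^ 2 ≤ 2 * L * s := by
      have hd := descent_lemma (hdiff k) (hLip k) (x k) (x k - (1 / L) • g)
      have h1 : (x k - (1 / L) • g) - x k = -((1 / L) • g) := by abel
      have h2 : ⟪g, -((1 / L) • g)⟫ = -(1 / L) * G ^ 2 := by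
        rw [inner_neg_right, real_inner_smul_right, real_inner_self_eq_norm_sq]
        ring
      have h3 : ‖-((1 / L) • g)‖ ^ 2 = (1 / L) ^ 2 * G ^ 2 := by
        rw [norm_neg, norm_smul, mul_pow]
        simp only [Real.norm_eq_abs, abs_of_pos (by positivity : (0:ℝ) < 1 / L)]
        rfl
      rw [← hg, h1, h2, h3] at hd
      have hm := hmin (x k - (1 / L) • g)
      have hL' : L ≠ 0 := ne_of_gt hL
      have : fstar k ≤ f k (x k) - 1 / (2 * L) * G ^ 2 := by
        refine le_trans hm (le_trans hd (le_of_eq ?_))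
        field_simp
        ring
      have hGs : 1 / (2 * L) * G ^ 2 ≤ s := by simp only [hs]; linarith
      rw [div_mul_eq_mul_div, div_le_iff₀ (by positivity : (0:ℝ) < 2 * L)] at hGs
      linarith [hGs]
    -- the gradient-step point
    set y' : EuclideanSpace ℝ (Fin n) := x k - α • g with hy'
    have hy'sq : ‖y' - p‖ ^ 2 = D ^ 2 - 2 * α * ⟪g, x k - p⟫ + α ^ 2 * G ^ 2 := by
      have h0 : y' - p = (x k - p) - α • g := by simp only [hy']; abel
      rw [h0, norm_sub_sq_real, real_inner_smul_right, real_inner_comm]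
      rw [norm_smul]
      simp only [Real.norm_eq_abs, abs_of_pos hα]
      ring
    have hsnn : (0:ℝ) ≤ 2 * α * (1 - α * L) * s := by
      have h1 : (0:ℝ) ≤ 1 - α * L := by linarith
      have h2 : (0:ℝ) ≤ 2 * α * (1 - α * L) := by positivity
      exact mul_nonneg h2 hs0
    have hA1 : ‖y' - p‖ ^ 2 ≤ D ^ 2 - 2 * α * (1 - α * L) * s := by
      have h1 : 2 * α * s ≤ 2 * α * ⟪g, x k - p⟫ :=
        mul_le_mul_of_nonneg_left hconvi (by positivity)
      have h2 : α ^ 2 * G ^ 2 ≤ α ^ 2 * (2 * L * s) :=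
        mul_le_mul_of_nonneg_left hgs (by positivity)
      rw [hy'sq]
      nlinarith [h1, h2]
    have hy'le : ‖y' - p‖ ≤ D := by
      have h1 : ‖y' - p‖ ^ 2 ≤ D ^ 2 := by linarith
      exact (pow_le_pow_iff_left₀ (norm_nonneg _) hD0 two_ne_zero).mp h1
    -- key inequality
    set N : ℝ := ‖y' - p‖ with hN
    have hN0 : 0 ≤ N := norm_nonneg _
    have hc2nn : (0:ℝ) ≤ 1 - α * L - α * L * ν ^ 2 := by
      have hx1 : α * L * (1 + ν) ^ 2 = α * L + 2 * (α * L * ν) + α * L * ν ^ 2 := by ring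
      have hx2 : (0:ℝ) ≤ α * L * ν := by positivity
      linarith
    have hkey : (N + α * ν * G) ^ 2 ≤ (ℓ * D) ^ 2 := by
      have e2 : 2 * α * ν * (G * N) ≤ 2 * α * ν * (L * D * D) := by
        have hGN : G * N ≤ L * D * D :=
          mul_le_mul hGL hy'le hN0 (by positivity)
        exact mul_le_mul_of_nonneg_left hGN (by positivity)
      have e3 : α ^ 2 * ν ^ 2 * G ^ 2 ≤ α ^ 2 * ν ^ 2 * (2 * L * s) :=
        mul_le_mul_of_nonneg_left hgs (by positivity)
      have e4 : 2 * α * (1 - α * L - α * L * ν ^ 2) * (μ / 2 * D ^ 2) ≤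
          2 * α * (1 - α * L - α * L * ν ^ 2) * s :=
        mul_le_mul_of_nonneg_left hqg (by positivity)
      have e5 : μ * α * (1 - α * L * (1 + ν) ^ 2) * D ^ 2 ≤
          2 * α * (1 - α * L - α * L * ν ^ 2) * (μ / 2 * D ^ 2) := by
        have h1 : (1 - α * L * (1 + ν) ^ 2) ≤ (1 - α * L - α * L * ν ^ 2) := by
          have hx1 : α * L * (1 + ν) ^ 2 = α * L + 2 * (α * L * ν) + α * L * ν ^ 2 := by ring
          have hx2 : (0:ℝ) ≤ α * L * ν := by positivity
          linarith
        have h2 : μ * α * (1 - α * L * (1 + ν) ^ 2) ≤ μ * α * (1 - α * L - α * L * ν ^ 2) :=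
          mul_le_mul_of_nonneg_left h1 (by positivity)
        have h3 := mul_le_mul_of_nonneg_right h2 (sq_nonneg D)
        calc μ * α * (1 - α * L * (1 + ν) ^ 2) * D ^ 2
            ≤ μ * α * (1 - α * L - α * L * ν ^ 2) * D ^ 2 := h3
          _ = 2 * α * (1 - α * L - α * L * ν ^ 2) * (μ / 2 * D ^ 2) := by ring
      have e6 : (ℓ * D) ^ 2 = (1 - μ * α * (1 - α * L * (1 + ν) ^ 2) + 2 * ν * α * L) * D ^ 2 := by
        rw [mul_pow, hℓsq]
      have st1 : (N + α * ν * G) ^ 2 = N ^ 2 + 2 * α * ν * (G * N) + α ^ 2 * ν ^ 2 * G ^ 2 := by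
        ring
      have st2 : D ^ 2 - 2 * α * (1 - α * L) * s + 2 * α * ν * (L * D * D) +
          α ^ 2 * ν ^ 2 * (2 * L * s) =
          D ^ 2 + 2 * ν * α * L * D ^ 2 - 2 * α * (1 - α * L - α * L * ν ^ 2) * s := by
        ring
      have st3 : D ^ 2 + 2 * ν * α * L * D ^ 2 -
          2 * α * (1 - α * L - α * L * ν ^ 2) * (μ / 2 * D ^ 2) ≤
          (1 - μ * α * (1 - α * L * (1 + ν) ^ 2) + 2 * ν * α * L) * D ^ 2 := by
        have : (1 - μ * α * (1 - α * L * (1 + ν) ^ 2) + 2 * ν * α * L) * D ^ 2 =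
            D ^ 2 + 2 * ν * α * L * D ^ 2 - μ * α * (1 - α * L * (1 + ν) ^ 2) * D ^ 2 := by
          ring
        linarith [e5]
      calc (N + α * ν * G) ^ 2
          = N ^ 2 + 2 * α * ν * (G * N) + α ^ 2 * ν ^ 2 * G ^ 2 := st1
        _ ≤ (D ^ 2 - 2 * α * (1 - α * L) * s) + 2 * α * ν * (L * D * D) +
            α ^ 2 * ν ^ 2 * (2 * L * s) := by linarith [hA1, e2, e3]
        _ = D ^ 2 + 2 * ν * α * L * D ^ 2 - 2 * α * (1 - α * L - α * L * ν ^ 2) * s := st2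
        _ ≤ D ^ 2 + 2 * ν * α * L * D ^ 2 -
            2 * α * (1 - α * L - α * L * ν ^ 2) * (μ / 2 * D ^ 2) := by linarith [e4]
        _ ≤ (1 - μ * α * (1 - α * L * (1 + ν) ^ 2) + 2 * ν * α * L) * D ^ 2 := st3
        _ = (ℓ * D) ^ 2 := e6.symm
    have hfin1 : N + α * ν * G ≤ ℓ * D := by
      have hnn : (0:ℝ) ≤ ℓ * D := by positivity
      have hnn2 : (0:ℝ) ≤ N + α * ν * G := by positivity
      exact (pow_le_pow_iff_left₀ hnn2 hnn two_ne_zero).mp hkey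
    -- step to x (k+1)
    have hxk1 : ‖x (k + 1) - p‖ ≤ ℓ * D + α * ε k := by
      have h0 : x (k + 1) - p = (y' - p) - α • e k := by
        rw [hrec k hk]; simp only [hy', smul_add]; abel
      calc ‖x (k + 1) - p‖ = ‖(y' - p) - α • e k‖ := by rw [h0]
        _ ≤ ‖y' - p‖ + ‖α • e k‖ := norm_sub_le _ _
        _ = ‖y' - p‖ + α * ‖e k‖ := by rw [norm_smul]; simp [abs_of_pos hα]
        _ ≤ ‖y' - p‖ + α * (ε k + ν * G) := by
            have := herr k hk
            nlinarith
        _ = (‖y' - p‖ + α * ν * G) + α * ε k := by ring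
        _ ≤ ℓ * D + α * ε k := by linarith
    -- shift to X (k+1)
    have hq : p + (xstar (k + 1) - xstar k) ∈ Xstar (k + 1) := by
      have hAp : A p = ustar k := by
        have := hp; rw [hXstar k] at this; exact this
      have hA1 : A (xstar (k + 1)) = ustar (k + 1) := by
        have := hxstar (k + 1); rw [hXstar (k + 1)] at this; exact this
      have hA2 : A (xstar k) = ustar k := by
        have := hxstar k; rw [hXstar k] at this; exact this
      rw [hXstar (k + 1)]
      show A (p + (xstar (k + 1) - xstar k)) = ustar (k + 1)
      rw [map_add, map_sub, hAp, hA1, hA2]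
      abel
    calc Metric.infDist (x (k + 1)) (Xstar (k + 1))
        ≤ dist (x (k + 1)) (p + (xstar (k + 1) - xstar k)) := Metric.infDist_le_dist_of_mem hq
      _ = ‖(x (k + 1) - p) - (xstar (k + 1) - xstar k)‖ := by rw [dist_eq_norm]; congr 1; abel
      _ ≤ ‖x (k + 1) - p‖ + ‖xstar (k + 1) - xstar k‖ := norm_sub_le _ _
      _ ≤ (ℓ * D + α * ε k) + σv := add_le_add hxk1 (hσv k hk)
      _ = ℓ * Metric.infDist (x k) (Xstar k) + (α * ε k + σv) := by rw [hDdist]; ring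
  -- Part 3: induction
  set r : ℝ := ℓ / χ with hr
  have hr0 : 0 < r := div_pos hℓpos hχpos
  have hr1 : r < 1 := (div_lt_one hχpos).mpr hℓχ
  have hrne : 1 - r ≠ 0 := by linarith
  have hσv0 : 0 ≤ σv := le_trans (norm_nonneg _) (hσv 1 le_rfl)
  have hεbar0 : 0 ≤ εbar := le_trans (hεnn 0) (hεbar 0)
  have hζpos : 0 < ζ := by rw [hζ]; positivity
  have hαζ : α ≤ ζ := by
    rw [hζ, le_div_iff₀ hℓpos]
    have h1 : ℓ ≤ 1 + α * L := by
      have : (0:ℝ) ≤ α * L := by positivity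
      linarith
    calc α * ℓ ≤ α * (1 + α * L) := mul_le_mul_of_nonneg_left h1 hα.le
      _ = α * (1 + α * L) := rfl
  set C : ℝ := (σv + ζ * εbar) / χ with hC
  have hstep2 : ∀ k, 1 ≤ k → Metric.infDist (x (k + 1)) (Xstar (k + 1)) ≤
      r * Metric.infDist (x k) (Xstar k) + C := by
    intro k hk
    have h1 := hstep1 k hk
    have hd0 : 0 ≤ Metric.infDist (x k) (Xstar k) := Metric.infDist_nonneg
    have hlr : ℓ * Metric.infDist (x k) (Xstar k) ≤ r * Metric.infDist (x k) (Xstar k) := by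
      apply mul_le_mul_of_nonneg_right _ hd0
      rw [hr, le_div_iff₀ hχpos]
      nlinarith
    have hC1 : α * ε k + σv ≤ C := by
      have h2 : α * ε k ≤ ζ * εbar := by
        have ha := hεnn k; have hb := hεbar k
        nlinarith
      have h3 : σv + ζ * εbar ≤ C := by
        rw [hC, le_div_iff₀ hχpos]
        nlinarith [mul_nonneg hζpos.le hεbar0]
      linarith
    linarith
  intro k hk
  induction k, hk using Nat.le_induction with
  | base =>
      have h := hstep2 1 le_rfl
      rw [pow_one, div_self hrne, one_mul]
      exact h
  | succ k hk ih =>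
      have h1 := hstep2 (k + 1) (Nat.succ_le_succ (Nat.zero_le k))
      have h2 : r * Metric.infDist (x (k + 1)) (Xstar (k + 1)) ≤
          r * ((r : ℝ) ^ k * Metric.infDist (x 1) (Xstar 1) + (1 - r ^ k) / (1 - r) * C) :=
        mul_le_mul_of_nonneg_left ih hr0.le
      have key : r * ((r : ℝ) ^ k * Metric.infDist (x 1) (Xstar 1) + (1 - r ^ k) / (1 - r) * C) + C =
          r ^ (k + 1) * Metric.infDist (x 1) (Xstar 1) + (1 - r ^ (k + 1)) / (1 - r) * C := by
        field_simp
        ring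
      linarith
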